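/- Let f be a ρ-symmetric bounded affine permutation of type (n,2n) and set m = #{i ∈ {1,…,2n} : f(i) = i+n}. Then σℓ(f) ≥ n − m/2. In particular, if m ∈ {0,2} then σℓ(f) ≥ n−1. -/

import Mathlib

/-- The set of alignments `(i,j)` of `f` with `1 ≤ i ≤ 2n`: pairs with `i < j ≤ f j < f i`. -/
def alignSet (n : ℕ) (f : ℤ → ℤ) : Set (ℤ × ℤ) :=
  {p | 1 ≤ p.1 ∧ p.1 ≤ 2 * (n : ℤ) ∧ p.1 < p.2 ∧ p.2 ≤ f p.2 ∧ f p.2 < f p.1}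

/-- The mirror map on alignments of a ρ-symmetric `f`: `(i,j)` is sent to the pair obtained
from `(f j + n, f i + n)` by adding to both coordinates the unique multiple of `2n`
placing the first coordinate in `{1, …, 2n}`. -/
def mirror (n : ℕ) (f : ℤ → ℤ) (p : ℤ × ℤ) : ℤ × ℤ :=
  ((f p.2 + (n : ℤ) - 1) % (2 * (n : ℤ)) + 1,
   f p.1 + (n : ℤ) + (((f p.2 + (n : ℤ) - 1) % (2 * (n : ℤ)) + 1) - (f p.2 + (n : ℤ))))

/-- `σℓ(f)`: the number of orbits of the mirror involution on the alignments of `f`;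
a pair of distinct mirrored alignments counts once and each self-mirror alignment
counts once, so it equals `(#alignments + #self-mirror alignments)/2`. -/
noncomputable def sigmaL (n : ℕ) (f : ℤ → ℤ) : ℕ :=
  ((alignSet n f).ncard + {p ∈ alignSet n f | mirror n f p = p}.ncard) / 2

/-- For a ρ-symmetric bounded affine permutation `f` of type `(n,2n)` with
`m = #{i ∈ [1,2n] : f i = i+n}`, one has `σℓ(f) ≥ n − m/2`; in particular,
if `m ∈ {0,2}` then `σℓ(f) ≥ n−1`. -/
theorem stmt15 (n : ℕ) (f : ℤ → ℤ)
    (hbij : Function.Bijective f)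
    (hper : ∀ i : ℤ, f (i + 2 * (n : ℤ)) = f i + 2 * (n : ℤ))
    (hbound : ∀ i : ℤ, i ≤ f i ∧ f i ≤ i + 2 * (n : ℤ))
    (hsum : ∑ i ∈ Finset.Icc (1 : ℤ) (2 * (n : ℤ)), (f i - i) = 2 * (n : ℤ) ^ 2)
    (hsym : ∀ i : ℤ, f (f i - (n : ℤ)) = i + (n : ℤ))
    (m : ℕ)
    (hm : m = ((Finset.Icc (1 : ℤ) (2 * (n : ℤ))).filter
      (fun i => f i = i + (n : ℤ))).card) :
    n - m / 2 ≤ sigmaL n f ∧ ((m = 0 ∨ m = 2) → n - 1 ≤ sigmaL n f) := by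
  classical
  rcases Nat.eq_zero_or_pos n with hn0 | hn
  · subst hn0
    exact ⟨by omega, fun _ => by omega⟩
  -- Setup
  set N : ℤ := 2 * (n : ℤ) with hNdef
  have hNpos : 0 < N := by simp [hNdef]; omega
  set g : ℤ → ℤ := fun i => f i - (n : ℤ) with hgdef
  have hfg : ∀ i, f (g i) = i + (n : ℤ) := fun i => hsym i
  have hgg : ∀ i, g (g i) = i := by
    intro i
    simp only [hgdef]
    rw [hsym i]; ring
  have hgb : ∀ i, i - (n : ℤ) ≤ g i ∧ g i ≤ i + (n : ℤ) := by
    intro i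
    have := hbound i
    simp only [hgdef]
    omega
  -- periodicity for arbitrary shifts
  have hperZ : ∀ t i : ℤ, f (i + N * t) = f i + N * t := by
    intro t
    induction t using Int.induction_on with
    | zero => simp
    | succ k ih =>
        intro i
        have h1 : i + N * (k + 1) = (i + N * k) + N := by ring
        rw [h1, hper, ih]; ring
    | pred k ih =>
        intro i
        have h1 : i + N * (-k - 1) + N = i + N * (-k) := by ring
        have := hper (i + N * (-k - 1))
        rw [h1, ih] at this
        omega
  have hgper : ∀ i t : ℤ, g (i + N * t) = g i + N * t := by
    intro i t
    simp only [hgdef]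
    rw [hperZ t i]; ring
  -- normalization into [1, N]
  set nor : ℤ → ℤ := fun x => (x - 1) % N + 1 with hnor
  have hnor_mem : ∀ x, 1 ≤ nor x ∧ nor x ≤ N := by
    intro x
    have h1 := Int.emod_nonneg (x - 1) (by omega : N ≠ 0)
    have h2 := Int.emod_lt_of_pos (x - 1) hNpos
    simp only [hnor]
    omega
  have hnor_spec : ∀ x, ∃ t : ℤ, nor x = x + N * t := by
    intro x
    refine ⟨-((x - 1) / N), ?_⟩
    simp only [hnor]
    rw [Int.emod_def]
    ring
  have hnor_id : ∀ x, 1 ≤ x → x ≤ N → nor x = x := by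
    intro x h1 h2
    simp only [hnor]
    rw [Int.emod_eq_of_lt (by omega) (by omega)]
    ring
  have hnor_add : ∀ x t : ℤ, nor (x + N * t) = nor x := by
    intro x t
    simp only [hnor]
    rw [show x + N * t - 1 = (x - 1) + N * t by ring, Int.add_mul_emod_self_left]
  -- the three finsets
  set I : Finset ℤ := Finset.Icc (1 : ℤ) N with hI
  set S : Finset ℤ := I.filter (fun i => i < g i) with hS
  set L : Finset ℤ := I.filter (fun i => g i < i) with hL
  set M : Finset ℤ := I.filter (fun i => g i = i) with hM
  have hIcard : I.card = 2 * n := by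
    rw [hI, Int.card_Icc]
    simp [hNdef]
    omega
  have hsplit : S.card + (L.card + M.card) = I.card := by
    have hLM : L ∪ M = I.filter (fun i => ¬ i < g i) := by
      ext x
      simp only [hL, hM, Finset.mem_union, Finset.mem_filter]
      constructor
      · rintro (⟨h1, h2⟩ | ⟨h1, h2⟩) <;> exact ⟨h1, by omega⟩
      · rintro ⟨h1, h2⟩
        rcases lt_or_eq_of_le (not_lt.mp h2) with h | h
        · exact Or.inl ⟨h1, h⟩
        · exact Or.inr ⟨h1, h⟩
    have hdisj : Disjoint L M := by
      rw [Finset.disjoint_left]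
      intro a ha hb
      simp only [hL, hM, Finset.mem_filter] at ha hb
      omega
    have hcu := Finset.card_union_of_disjoint hdisj
    have h2 : S.card + (I.filter (fun i => ¬ i < g i)).card = I.card := by
      rw [hS]
      exact Finset.card_filter_add_card_filter_not _
    rw [← hLM, hcu] at h2
    exact h2
  have hSL : S.card = L.card := by
    apply Finset.card_bij' (i := fun i _ => nor (g i)) (j := fun j _ => nor (g j))
    · intro a ha
      simp only [hS, Finset.mem_filter, hI, Finset.mem_Icc] at ha
      obtain ⟨t, ht⟩ := hnor_spec (g a)
      have hmem := hnor_mem (g a)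
      simp only [hL, Finset.mem_filter, hI, Finset.mem_Icc]
      refine ⟨⟨hmem.1, hmem.2⟩, ?_⟩
      rw [ht, hgper, hgg]
      omega
    · intro a ha
      simp only [hL, Finset.mem_filter, hI, Finset.mem_Icc] at ha
      obtain ⟨t, ht⟩ := hnor_spec (g a)
      have hmem := hnor_mem (g a)
      simp only [hS, Finset.mem_filter, hI, Finset.mem_Icc]
      refine ⟨⟨hmem.1, hmem.2⟩, ?_⟩
      rw [ht, hgper, hgg]
      omega
    · intro a ha
      simp only [hS, Finset.mem_filter, hI, Finset.mem_Icc] at ha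
      obtain ⟨t, ht⟩ := hnor_spec (g a)
      rw [ht, hgper, hgg, hnor_add, hnor_id a ha.1.1 ha.1.2]
    · intro a ha
      simp only [hL, Finset.mem_filter, hI, Finset.mem_Icc] at ha
      obtain ⟨t, ht⟩ := hnor_spec (g a)
      rw [ht, hgper, hgg, hnor_add, hnor_id a ha.1.1 ha.1.2]
  have hmM : m = M.card := by
    rw [hm, hM]
    congr 1
    apply Finset.filter_congr
    intro x _
    simp only [hgdef]
    constructor <;> intro h <;> omega
  have hKey : 2 * S.card + m = 2 * n := by omega
  -- alignments
  have hAfin : (alignSet n f).Finite := by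
    apply Set.Finite.subset ((Set.finite_Icc (1 : ℤ) N).prod (Set.finite_Icc (1 : ℤ) (2 * N)))
    rintro ⟨i, j⟩ ⟨h1, h2, h3, h4, h5⟩
    have hb := hbound i
    constructor
    · exact ⟨h1, h2⟩
    · constructor
      · omega
      · simp only at h2 h3 h4 h5 ⊢
        omega
  set B : Set (ℤ × ℤ) := {p ∈ alignSet n f | mirror n f p = p} with hB
  have hBsub : B ⊆ alignSet n f := fun p hp => hp.1
  have hBfin : B.Finite := hAfin.subset hBsub
  set T : Finset (ℤ × ℤ) := S.image (fun i => (i, g i)) with hT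
  have hTcard : T.card = S.card := by
    rw [hT]
    apply Finset.card_image_of_injOn
    intro a _ b _ hab
    exact congrArg Prod.fst hab
  have hTB : (T : Set (ℤ × ℤ)) ⊆ B := by
    intro p hp
    simp only [hT, Finset.coe_image, Set.mem_image, Finset.mem_coe] at hp
    obtain ⟨i, hi, rfl⟩ := hp
    simp only [hS, Finset.mem_filter, hI, Finset.mem_Icc] at hi
    obtain ⟨⟨hi1, hi2⟩, hig⟩ := hi
    have hgbi := hgb i
    have halign : (i, g i) ∈ alignSet n f := by
      refine ⟨hi1, hi2, hig, ?_, ?_⟩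
      · simp only [hfg]
        omega
      · have hfi : g i = f i - (n : ℤ) := by simp [hgdef]
        simp only [hfg]
        omega
    refine ⟨halign, ?_⟩
    have hfst : (f (g i) + (n : ℤ) - 1) % (2 * (n : ℤ)) + 1 = i := by
      rw [hfg]
      rw [show i + (n : ℤ) + (n : ℤ) - 1 = (i - 1) + (2 * (n : ℤ)) * 1 by ring,
        Int.add_mul_emod_self_left, Int.emod_eq_of_lt (by omega) (by omega)]
      ring
    have hsnd : f i + (n : ℤ) + ((f (g i) + (n : ℤ) - 1) % (2 * (n : ℤ)) + 1 - (f (g i) + (n : ℤ))) = g i := by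
      rw [hfst, hfg]
      simp only [hgdef]
      ring
    simp only [mirror, Prod.mk.injEq]
    exact ⟨hfst, hsnd⟩
  have hBcard : S.card ≤ B.ncard := by
    rw [← hTcard, ← Set.ncard_coe_finset]
    exact Set.ncard_le_ncard hTB hBfin
  have hAcard : S.card ≤ (alignSet n f).ncard := by
    rw [← hTcard, ← Set.ncard_coe_finset]
    exact Set.ncard_le_ncard (hTB.trans hBsub) hAfin
  have hsig : sigmaL n f = ((alignSet n f).ncard + B.ncard) / 2 := rfl
  constructor
  · rw [hsig]; omega
  · intro _; rw [hsig]; omega
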